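/- Let p > 1, b, f ∈ L¹([0,T], ℝ≥0), a ∈ L¹([0,T], ℝ), and let x ∈ W^{1,1}([0,T], ℝ≥0) ∩ C⁰([0,T], ℝ≥0) satisfy ẋ ≤ b(t)x^p + a(t)x + f(t) with x(0) = x₀. Define A(t) = ∫₀ᵗ a(s) ds, b̃(t) = b(t)e^{(p−1)A(t)}, f̃(t) = e^{−A(t)}f(t). Then for all t ∈ [0,T] with (p−1)(x₀ + ∫₀ᵗ f̃ ds)^{p−1} ∫₀ᵗ b̃ ds < 1, one has x(t) ≤ e^{A(t)}(x₀ + ∫₀ᵗ f̃(s) ds)·(1 − (p−1)(x₀ + ∫₀ᵗ f̃(s) ds)^{p−1} ∫₀ᵗ b̃(s) ds)^{−1/(p−1)}. -/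

import Mathlib

open MeasureTheory Set intervalIntegral

lemma CP.abs_primitive_le {φ : ℝ → ℝ} (hφ : Integrable φ volume) (s : ℝ) :
    |∫ u in (0:ℝ)..s, φ u| ≤ ∫ u, |φ u| := by
  have key : ∀ r : ℝ, 0 ≤ r → |∫ u in (0:ℝ)..r, φ u| ≤ ∫ u, |φ u| := by
    intro r hr
    calc |∫ u in (0:ℝ)..r, φ u| ≤ ∫ u in (0:ℝ)..r, |φ u| :=
          intervalIntegral.abs_integral_le_integral_abs hr
      _ = ∫ u in Ioc (0:ℝ) r, |φ u| := intervalIntegral.integral_of_le hr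
      _ ≤ ∫ u, |φ u| :=
          setIntegral_le_integral hφ.abs (Filter.Eventually.of_forall fun u => abs_nonneg _)
  rcases le_total 0 s with h | h
  · exact key s h
  · rw [intervalIntegral.integral_symm]
    rw [abs_neg]
    calc |∫ u in s..(0:ℝ), φ u| ≤ ∫ u in s..(0:ℝ), |φ u| :=
          intervalIntegral.abs_integral_le_integral_abs h
      _ = ∫ u in Ioc s (0:ℝ), |φ u| := intervalIntegral.integral_of_le h
      _ ≤ ∫ u, |φ u| :=
          setIntegral_le_integral hφ.abs (Filter.Eventually.of_forall fun u => abs_nonneg _)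

lemma CP.interval_abs_le {φ : ℝ → ℝ} (hφ : Integrable φ volume) {t : ℝ} (ht : 0 ≤ t) :
    ∫ u in (0:ℝ)..t, |φ u| ≤ ∫ u, |φ u| := by
  rw [intervalIntegral.integral_of_le ht]
  exact setIntegral_le_integral hφ.abs (Filter.Eventually.of_forall fun u => abs_nonneg _)

lemma CP.ftc_comp {φ F h h' : ℝ → ℝ} {c t lo hi lo' hi' : ℝ}
    (ht : 0 ≤ t) (hφ : Integrable φ volume)
    (hF : ∀ s, F s = c + ∫ u in (0:ℝ)..s, φ u)
    (hlo : lo' < lo) (hhi : hi < hi')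
    (hrange : ∀ s ∈ Icc 0 t, F s ∈ Icc lo hi)
    (hd : ∀ z ∈ Ioo lo' hi', HasDerivAt h (h' z) z)
    (hctsd : ContinuousOn h' (Ioo lo' hi')) :
    h (F t) = h c + ∫ s in (0:ℝ)..t, h' (F s) * φ s := by
  have hF0 : F 0 = c := by simp [hF]
  have hFc : Continuous F := by
    have h1 : Continuous fun s => c + ∫ u in (0:ℝ)..s, φ u :=
      continuous_const.add (hφ.continuous_primitive 0)
    exact (funext hF : F = _) ▸ h1
  set m := min (lo - lo') (hi' - hi) / 2 with hm_def
  have hm : 0 < m := by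
    have := lt_min (sub_pos.2 hlo) (sub_pos.2 hhi)
    positivity
  have hm1 : m < lo - lo' := by
    have h1 := min_le_left (lo - lo') (hi' - hi)
    have h2 : 0 < lo - lo' := sub_pos.2 hlo
    rw [hm_def]; linarith
  have hm2 : m < hi' - hi := by
    have h1 := min_le_right (lo - lo') (hi' - hi)
    have h2 : 0 < hi' - hi := sub_pos.2 hhi
    rw [hm_def]; linarith
  set K := Icc (lo - m) (hi + m) with hK_def
  have hKsub : K ⊆ Ioo lo' hi' := fun z hz => ⟨by have := hz.1; simp [hK_def] at this ⊢; linarith,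
    by have := hz.2; simp [hK_def] at this ⊢; linarith⟩
  have hKcpt : IsCompact K := isCompact_Icc
  have hcK : ContinuousOn h' K := hctsd.mono hKsub
  obtain ⟨C0, hC0⟩ := hKcpt.exists_bound_of_continuousOn hcK
  set C := max C0 0 with hC_def
  have hC : ∀ z ∈ K, |h' z| ≤ C := fun z hz => by
    have := hC0 z hz; rw [Real.norm_eq_abs] at this; exact this.trans (le_max_left _ _)
  have hCnn : (0:ℝ) ≤ C := le_max_right _ _
  set Mφ := ∫ u, |φ u| with hMφ_def
  have hMφnn : 0 ≤ Mφ := integral_nonneg fun _ => abs_nonneg _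
  -- reduce to ε-approximation
  suffices Hs : ∀ ε > (0:ℝ), |h (F t) - h c - ∫ s in (0:ℝ)..t, h' (F s) * φ s| ≤ ε by
    have h0 : |h (F t) - h c - ∫ s in (0:ℝ)..t, h' (F s) * φ s| ≤ 0 :=
      le_of_forall_pos_le_add fun ε hε => by simpa using Hs ε hε
    have := abs_nonneg (h (F t) - h c - ∫ s in (0:ℝ)..t, h' (F s) * φ s)
    have heq : h (F t) - h c - ∫ s in (0:ℝ)..t, h' (F s) * φ s = 0 := by
      have := abs_eq_zero.1 (le_antisymm h0 this)
      exact this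
    linarith [heq]
  intro ε hε
  -- uniform continuity of h' on K
  have ucK := hKcpt.uniformContinuousOn_of_continuous hcK
  rw [Metric.uniformContinuousOn_iff] at ucK
  set ε₁ := ε / (2 * (Mφ + 1)) with hε₁_def
  have hε₁ : 0 < ε₁ := by positivity
  obtain ⟨δ, hδpos, hδ⟩ := ucK ε₁ hε₁
  set η := min (min (m / 2) (δ / 2)) (min 1 (ε / (4 * (C + 1)))) with hη_def
  have hηpos : 0 < η := by positivity
  have hηm : η ≤ m / 2 := le_trans (min_le_left _ _) (min_le_left _ _)
  have hηδ : η ≤ δ / 2 := le_trans (min_le_left _ _) (min_le_right _ _)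
  have hη1 : η ≤ 1 := le_trans (min_le_right _ _) (min_le_left _ _)
  have hηε : η ≤ ε / (4 * (C + 1)) := le_trans (min_le_right _ _) (min_le_right _ _)
  obtain ⟨g, gsupp, hgη, hgc, hgi⟩ := hφ.exists_hasCompactSupport_integral_sub_le hηpos
  set G := fun s => c + ∫ u in (0:ℝ)..s, g u with hG_def
  have hG0 : G 0 = c := by simp [hG_def]
  have hGc : Continuous G := continuous_const.add (hgi.continuous_primitive 0)
  have hφg : Integrable (fun u => φ u - g u) volume := hφ.sub hgi
  have hFG : ∀ s, |F s - G s| ≤ η := by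
    intro s
    have hsub : F s - G s = ∫ u in (0:ℝ)..s, (φ u - g u) := by
      rw [hF, hG_def, intervalIntegral.integral_sub hφ.intervalIntegrable
        hgi.intervalIntegrable]
      ring
    rw [hsub]
    refine (CP.abs_primitive_le hφg s).trans ?_
    simpa [Real.norm_eq_abs] using hgη
  have hFK : ∀ s ∈ Icc 0 t, F s ∈ K := fun s hs => by
    have h1 := hrange s hs
    exact ⟨by linarith [h1.1, hm.le], by linarith [h1.2, hm.le]⟩
  have hGK : ∀ s ∈ Icc 0 t, G s ∈ K := fun s hs => by
    have h1 := hrange s hs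
    have h2 := abs_le.1 (hFG s)
    exact ⟨by linarith [h1.1, hηm], by linarith [h1.2, hηm]⟩
  -- FTC for the smooth approximation
  have hGderiv : ∀ s, HasDerivAt G (g s) s := by
    intro s
    have h1 : HasDerivAt (fun u => ∫ x in (0:ℝ)..u, g x) (g s) s :=
      intervalIntegral.integral_hasDerivAt_right hgi.intervalIntegrable
        (hgc.stronglyMeasurableAtFilter _ _) hgc.continuousAt
    simpa [hG_def] using h1.const_add c
  have hGmem : ∀ s ∈ uIcc (0:ℝ) t, G s ∈ Ioo lo' hi' := fun s hs =>
    hKsub (hGK s (by rwa [uIcc_of_le ht] at hs))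
  have hcomp : ∀ s ∈ uIcc (0:ℝ) t, HasDerivAt (fun u => h (G u)) (h' (G s) * g s) s :=
    fun s hs => (hd _ (hGmem s hs)).comp s (hGderiv s)
  have hintG : IntervalIntegrable (fun s => h' (G s) * g s) volume 0 t := by
    apply hgi.intervalIntegrable.continuousOn_mul
    exact hctsd.comp hGc.continuousOn hGmem
  have hFTC : ∫ s in (0:ℝ)..t, h' (G s) * g s = h (G t) - h c := by
    rw [← hG0]
    exact intervalIntegral.integral_eq_sub_of_hasDerivAt hcomp hintG
  -- error term E1
  have htmem : t ∈ Icc (0:ℝ) t := ⟨ht, le_refl t⟩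
  have hE1 : |h (F t) - h (G t)| ≤ C * η := by
    have h1 := (convex_Icc (lo - m) (hi + m)).norm_image_sub_le_of_norm_hasDerivWithin_le
      (f' := h') (fun z hz => (hd z (hKsub hz)).hasDerivWithinAt)
      (fun z hz => by rw [Real.norm_eq_abs]; exact hC z hz)
      (hGK t htmem) (hFK t htmem)
    rw [Real.norm_eq_abs, Real.norm_eq_abs] at h1
    refine h1.trans ?_
    exact mul_le_mul_of_nonneg_left (hFG t) hCnn
  -- integrability facts
  have hFmem : ∀ s ∈ uIcc (0:ℝ) t, F s ∈ Ioo lo' hi' := fun s hs =>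
    hKsub (hFK s (by rwa [uIcc_of_le ht] at hs))
  have hctsF : ContinuousOn (fun s => h' (F s)) (uIcc (0:ℝ) t) :=
    hctsd.comp hFc.continuousOn hFmem
  have hintF : IntervalIntegrable (fun s => h' (F s) * φ s) volume 0 t :=
    hφ.intervalIntegrable.continuousOn_mul hctsF
  -- error term E2
  have hηglobal : ∫ x, |φ x - g x| ≤ η := by simpa [Real.norm_eq_abs] using hgη
  have hφgint : ∫ s in (0:ℝ)..t, |φ s - g s| ≤ η :=
    (CP.interval_abs_le hφg ht).trans hηglobal
  have hgabs : ∫ s in (0:ℝ)..t, |g s| ≤ Mφ + 1 := by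
    have hpt : ∀ s ∈ Icc (0:ℝ) t, |g s| ≤ |φ s| + |φ s - g s| := by
      intro s _
      have h3 := abs_add_le (φ s) (g s - φ s)
      have h4 : φ s + (g s - φ s) = g s := by ring
      rw [h4] at h3
      calc |g s| ≤ |φ s| + |g s - φ s| := h3
        _ = |φ s| + |φ s - g s| := by rw [abs_sub_comm]
    calc ∫ s in (0:ℝ)..t, |g s|
        ≤ ∫ s in (0:ℝ)..t, (|φ s| + |φ s - g s|) :=
          intervalIntegral.integral_mono_on ht hgi.abs.intervalIntegrable
            (hφ.abs.add hφg.abs).intervalIntegrable hpt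
      _ = (∫ s in (0:ℝ)..t, |φ s|) + ∫ s in (0:ℝ)..t, |φ s - g s| :=
          intervalIntegral.integral_add hφ.abs.intervalIntegrable hφg.abs.intervalIntegrable
      _ ≤ Mφ + 1 := by
          have := CP.interval_abs_le hφ ht
          linarith [hφgint, hη1]
  have hintFg : IntervalIntegrable (fun s => h' (F s) * g s) volume 0 t :=
    hgi.intervalIntegrable.continuousOn_mul hctsF
  have hE2 : |(∫ s in (0:ℝ)..t, h' (F s) * φ s) - ∫ s in (0:ℝ)..t, h' (G s) * g s|
      ≤ C * η + ε₁ * (Mφ + 1) := by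
    rw [← intervalIntegral.integral_sub hintF hintG]
    have habs : |∫ s in (0:ℝ)..t, (h' (F s) * φ s - h' (G s) * g s)|
        ≤ ∫ s in (0:ℝ)..t, |h' (F s) * φ s - h' (G s) * g s| :=
      intervalIntegral.abs_integral_le_integral_abs ht
    refine habs.trans ?_
    have hptbd : ∀ s ∈ Icc (0:ℝ) t, |h' (F s) * φ s - h' (G s) * g s|
        ≤ C * |φ s - g s| + ε₁ * |g s| := by
      intro s hs
      have heq : h' (F s) * φ s - h' (G s) * g s
          = h' (F s) * (φ s - g s) + (h' (F s) - h' (G s)) * g s := by ring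
      rw [heq]
      refine (abs_add_le _ _).trans ?_
      have hb1 : |h' (F s) * (φ s - g s)| ≤ C * |φ s - g s| := by
        rw [abs_mul]
        exact mul_le_mul_of_nonneg_right (hC _ (hFK s hs)) (abs_nonneg _)
      have hb2 : |(h' (F s) - h' (G s)) * g s| ≤ ε₁ * |g s| := by
        rw [abs_mul]
        refine mul_le_mul_of_nonneg_right ?_ (abs_nonneg _)
        have hdist := hδ (F s) (hFK s hs) (G s) (hGK s hs)
          (by rw [Real.dist_eq]; exact lt_of_le_of_lt (hFG s) (by linarith [hηδ, hδpos]))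
        rw [Real.dist_eq] at hdist
        exact hdist.le
      linarith
    calc ∫ s in (0:ℝ)..t, |h' (F s) * φ s - h' (G s) * g s|
        ≤ ∫ s in (0:ℝ)..t, (C * |φ s - g s| + ε₁ * |g s|) :=
          intervalIntegral.integral_mono_on ht (hintF.sub hintG).abs
            (((hφg.abs.const_mul C).add (hgi.abs.const_mul ε₁)).intervalIntegrable) hptbd
      _ = C * (∫ s in (0:ℝ)..t, |φ s - g s|) + ε₁ * ∫ s in (0:ℝ)..t, |g s| := by
          rw [intervalIntegral.integral_add ((hφg.abs.const_mul C).intervalIntegrable)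
            ((hgi.abs.const_mul ε₁).intervalIntegrable),
            intervalIntegral.integral_const_mul, intervalIntegral.integral_const_mul]
      _ ≤ C * η + ε₁ * (Mφ + 1) := by
          have h1 : C * (∫ s in (0:ℝ)..t, |φ s - g s|) ≤ C * η :=
            mul_le_mul_of_nonneg_left hφgint hCnn
          have h2 : ε₁ * (∫ s in (0:ℝ)..t, |g s|) ≤ ε₁ * (Mφ + 1) :=
            mul_le_mul_of_nonneg_left hgabs hε₁.le
          linarith
  -- combine
  have hdecomp : h (F t) - h c - (∫ s in (0:ℝ)..t, h' (F s) * φ s)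
      = (h (F t) - h (G t)) + ((∫ s in (0:ℝ)..t, h' (G s) * g s)
          - ∫ s in (0:ℝ)..t, h' (F s) * φ s) := by
    rw [hFTC]; ring
  rw [hdecomp]
  have h1 := abs_add_le (h (F t) - h (G t)) ((∫ s in (0:ℝ)..t, h' (G s) * g s)
    - ∫ s in (0:ℝ)..t, h' (F s) * φ s)
  have h2 : |(∫ s in (0:ℝ)..t, h' (G s) * g s) - ∫ s in (0:ℝ)..t, h' (F s) * φ s|
      ≤ C * η + ε₁ * (Mφ + 1) := by rw [abs_sub_comm]; exact hE2
  have hC1 : (C:ℝ) + 1 ≠ 0 := by positivity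
  have hCη : C * η ≤ ε / 4 := by
    have h3 : C * η ≤ C * (ε / (4 * (C + 1))) := mul_le_mul_of_nonneg_left hηε hCnn
    have h5 : C * (ε / (4 * (C + 1))) ≤ (C + 1) * (ε / (4 * (C + 1))) :=
      mul_le_mul_of_nonneg_right (by linarith) (by positivity)
    have h6 : (C + 1) * (ε / (4 * (C + 1))) = ε / 4 := by field_simp
    linarith
  have hM1 : (Mφ:ℝ) + 1 ≠ 0 := by positivity
  have hε₁M : ε₁ * (Mφ + 1) = ε / 2 := by rw [hε₁_def]; field_simp
  linarith

lemma CP.prod_primitive {φ ψ F G : ℝ → ℝ} {cφ cψ t : ℝ} (ht : 0 ≤ t)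
    (hφ : Integrable φ volume) (hψ : Integrable ψ volume)
    (hF : ∀ s, F s = cφ + ∫ u in (0:ℝ)..s, φ u)
    (hG : ∀ s, G s = cψ + ∫ u in (0:ℝ)..s, ψ u) :
    F t * G t = cφ * cψ + ∫ s in (0:ℝ)..t, (F s * ψ s + G s * φ s) := by
  have hFc : Continuous F := by
    have h1 : Continuous fun s => cφ + ∫ u in (0:ℝ)..s, φ u :=
      continuous_const.add (hφ.continuous_primitive 0)
    exact (funext hF : F = _) ▸ h1
  have hGc : Continuous G := by
    have h1 : Continuous fun s => cψ + ∫ u in (0:ℝ)..s, ψ u :=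
      continuous_const.add (hψ.continuous_primitive 0)
    exact (funext hG : G = _) ▸ h1
  set S : ℝ → ℝ := fun s => (cφ + cψ) + ∫ u in (0:ℝ)..s, (φ u + ψ u) with hS_def
  have hS : ∀ s, S s = F s + G s := by
    intro s
    rw [hS_def]
    simp only []
    rw [intervalIntegral.integral_add hφ.intervalIntegrable hψ.intervalIntegrable, hF, hG]
    ring
  obtain ⟨R, hRpos, hFR, hGR, hSR⟩ : ∃ R, 0 < R ∧ (∀ s, |F s| ≤ R) ∧ (∀ s, |G s| ≤ R) ∧
      (∀ s, |S s| ≤ 2 * R) := by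
    have hMφnn : 0 ≤ ∫ u, |φ u| := integral_nonneg fun _ => abs_nonneg _
    have hMψnn : 0 ≤ ∫ u, |ψ u| := integral_nonneg fun _ => abs_nonneg _
    refine ⟨(|cφ| + ∫ u, |φ u|) + (|cψ| + ∫ u, |ψ u|) + 1, by positivity, ?_, ?_, ?_⟩
    · intro s
      rw [hF]
      refine (abs_add_le _ _).trans ?_
      have := CP.abs_primitive_le hφ s
      have := abs_nonneg cψ
      linarith
    · intro s
      rw [hG]
      refine (abs_add_le _ _).trans ?_
      have := CP.abs_primitive_le hψ s
      have := abs_nonneg cφ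
      linarith
    · intro s
      rw [hS s]
      refine (abs_add_le _ _).trans ?_
      have h1 := CP.abs_primitive_le hφ s
      have h2 := CP.abs_primitive_le hψ s
      have h3 := abs_add_le cφ ((∫ u in (0:ℝ)..s, φ u))
      have h4 := abs_add_le cψ ((∫ u in (0:ℝ)..s, ψ u))
      have h5 := abs_nonneg cφ
      have h6 := abs_nonneg cψ
      rw [hF, hG]
      linarith
  -- squares via ftc_comp, h z = z * z
  have hd : ∀ z ∈ Ioo (-(2 * R + 1)) (2 * R + 1), HasDerivAt (fun z : ℝ => z * z) (2 * z) z := by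
    intro z _
    have h1 : HasDerivAt (fun y : ℝ => id y * id y) _ z := (hasDerivAt_id z).fun_mul (hasDerivAt_id z)
    simp only [id_eq, one_mul, mul_one] at h1
    convert h1 using 1
    ring
  have hctsd : ContinuousOn (fun z : ℝ => 2 * z) (Ioo (-(2 * R + 1)) (2 * R + 1)) :=
    (continuous_const.mul continuous_id).continuousOn
  have hrangeF : ∀ s ∈ Icc (0:ℝ) t, F s ∈ Icc (-(2 * R)) (2 * R) := fun s _ => by
    have h1 := abs_le.1 (hFR s)
    exact ⟨by linarith [h1.1], by linarith [h1.2]⟩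
  have hrangeG : ∀ s ∈ Icc (0:ℝ) t, G s ∈ Icc (-(2 * R)) (2 * R) := fun s _ => by
    have h1 := abs_le.1 (hGR s)
    exact ⟨by linarith [h1.1], by linarith [h1.2]⟩
  have hrangeS : ∀ s ∈ Icc (0:ℝ) t, S s ∈ Icc (-(2 * R)) (2 * R) := fun s _ => by
    have h1 := abs_le.1 (hSR s)
    exact ⟨by linarith [h1.1], by linarith [h1.2]⟩
  have hlo : -(2 * R + 1) < -(2 * R) := by linarith
  have hhi : 2 * R < 2 * R + 1 := by linarith
  have hsqF := CP.ftc_comp ht hφ hF hlo hhi hrangeF hd hctsd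
  have hsqG := CP.ftc_comp ht hψ hG hlo hhi hrangeG hd hctsd
  have hSpr : ∀ s, S s = (cφ + cψ) + ∫ u in (0:ℝ)..s, (φ u + ψ u) := fun s => rfl
  have hsqS := CP.ftc_comp ht (hφ.add hψ) hSpr hlo hhi hrangeS hd hctsd
  simp only [Pi.add_apply] at hsqS
  -- interval integrability of the products
  have iFφ : IntervalIntegrable (fun s => 2 * F s * φ s) volume 0 t := by
    have := hφ.intervalIntegrable.continuousOn_mul (a := 0) (b := t)
      (g := fun s => 2 * F s) ((continuous_const.mul hFc).continuousOn)
    simpa [mul_assoc] using this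
  have iGψ : IntervalIntegrable (fun s => 2 * G s * ψ s) volume 0 t := by
    have := hψ.intervalIntegrable.continuousOn_mul (a := 0) (b := t)
      (g := fun s => 2 * G s) ((continuous_const.mul hGc).continuousOn)
    simpa [mul_assoc] using this
  have hSc : Continuous S := continuous_const.add ((hφ.add hψ).continuous_primitive 0)
  have iSφψ : IntervalIntegrable (fun s => 2 * S s * (φ s + ψ s)) volume 0 t := by
    have := (hφ.add hψ).intervalIntegrable.continuousOn_mul (a := 0) (b := t)
      (g := fun s => 2 * S s) ((continuous_const.mul hSc).continuousOn)
    simpa [mul_assoc] using this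
  have iFψ : IntervalIntegrable (fun s => F s * ψ s) volume 0 t :=
    hψ.intervalIntegrable.continuousOn_mul hFc.continuousOn
  have iGφ : IntervalIntegrable (fun s => G s * φ s) volume 0 t :=
    hφ.intervalIntegrable.continuousOn_mul hGc.continuousOn
  -- combination of the integrals
  have hcomb : (∫ s in (0:ℝ)..t, 2 * S s * (φ s + ψ s)) - (∫ s in (0:ℝ)..t, 2 * F s * φ s)
      - (∫ s in (0:ℝ)..t, 2 * G s * ψ s)
      = 2 * ∫ s in (0:ℝ)..t, (F s * ψ s + G s * φ s) := by
    rw [← intervalIntegral.integral_sub iSφψ iFφ, ← intervalIntegral.integral_sub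
      (iSφψ.sub iFφ) iGψ, ← intervalIntegral.integral_const_mul]
    refine intervalIntegral.integral_congr fun s _ => ?_
    rw [hS s]
    ring
  -- final algebra
  have hFG2 : F t * G t = (S t * S t - F t * F t - G t * G t) / 2 := by
    rw [hS t]; ring
  rw [hFG2, hsqF, hsqG, hsqS]
  have hc0 : S 0 = cφ + cψ := by
    have := hSpr 0
    simpa using this
  linarith [hcomb]

/-- CP-Type II: explicit upper bound for `ẋ ≤ b(t)x^p + a(t)x + f(t)`. -/
theorem cp_type_II (T : ℝ) (hT : 0 ≤ T) (p : ℝ) (hp : 1 < p)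
    (a b f x x' : ℝ → ℝ) (x₀ : ℝ)
    (ha : IntegrableOn a (Icc 0 T))
    (hb : IntegrableOn b (Icc 0 T)) (hbnn : ∀ t ∈ Icc (0:ℝ) T, 0 ≤ b t)
    (hf : IntegrableOn f (Icc 0 T)) (hfnn : ∀ t ∈ Icc (0:ℝ) T, 0 ≤ f t)
    (hxnn : ∀ t ∈ Icc (0:ℝ) T, 0 ≤ x t)
    (hx' : IntegrableOn x' (Icc 0 T)) (hxc : ContinuousOn x (Icc 0 T))
    (hxAC : ∀ t ∈ Icc (0:ℝ) T, x t = x 0 + ∫ s in (0:ℝ)..t, x' s)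
    (hineq : ∀ᵐ t ∂(volume.restrict (Icc (0:ℝ) T)),
      x' t ≤ b t * x t ^ p + a t * x t + f t)
    (hx0 : x 0 = x₀)
    (A btilde ftilde : ℝ → ℝ)
    (hA : ∀ t, A t = ∫ s in (0:ℝ)..t, a s)
    (hbt : ∀ t, btilde t = b t * Real.exp ((p - 1) * A t))
    (hft : ∀ t, ftilde t = Real.exp (-A t) * f t) :
    ∀ t ∈ Icc (0:ℝ) T,
      (p - 1) * (x₀ + ∫ s in (0:ℝ)..t, ftilde s) ^ (p - 1) *
        (∫ s in (0:ℝ)..t, btilde s) < 1 →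
      x t ≤ Real.exp (A t) * (x₀ + ∫ s in (0:ℝ)..t, ftilde s) *
        (1 - (p - 1) * (x₀ + ∫ s in (0:ℝ)..t, ftilde s) ^ (p - 1) *
          (∫ s in (0:ℝ)..t, btilde s)) ^ (-(1 / (p - 1))) := by
  have hx₀nn : 0 ≤ x₀ := hx0 ▸ hxnn 0 ⟨le_refl 0, hT⟩
  -- globalized integrands
  set abar := (Icc (0:ℝ) T).indicator a with habar_def
  set bbar := (Icc (0:ℝ) T).indicator b with hbbar_def
  set fbar := (Icc (0:ℝ) T).indicator f with hfbar_def
  set xbar' := (Icc (0:ℝ) T).indicator x' with hxbar'_def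
  have habar : Integrable abar volume := ha.integrable_indicator measurableSet_Icc
  have hbbar : Integrable bbar volume := hb.integrable_indicator measurableSet_Icc
  have hfbar : Integrable fbar volume := hf.integrable_indicator measurableSet_Icc
  have hxbar' : Integrable xbar' volume := hx'.integrable_indicator measurableSet_Icc
  -- globalized A
  set Abar : ℝ → ℝ := fun s => ∫ u in (0:ℝ)..s, abar u with hAbar_def
  have hAbarc : Continuous Abar := habar.continuous_primitive 0
  have hsubIcc : ∀ s ∈ Icc (0:ℝ) T, uIcc (0:ℝ) s ⊆ Icc (0:ℝ) T := by
    intro s hs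
    rw [uIcc_of_le hs.1]
    exact Icc_subset_Icc (le_refl 0) hs.2
  have hAA : ∀ s ∈ Icc (0:ℝ) T, A s = Abar s := by
    intro s hs
    rw [hA s, hAbar_def]
    exact intervalIntegral.integral_congr fun u hu =>
      (indicator_of_mem (hsubIcc s hs hu) a).symm
  set MA := ∫ u, |abar u| with hMA_def
  have hAbd : ∀ s, |Abar s| ≤ MA := fun s => CP.abs_primitive_le habar s
  -- the exponential as a primitive
  set ψ : ℝ → ℝ := fun u => -Real.exp (-Abar u) * abar u with hψ_def
  have hψint : Integrable ψ volume := by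
    refine habar.bdd_mul ?_ (c := Real.exp MA) (Filter.Eventually.of_forall fun u => ?_)
    · exact ((Real.continuous_exp.comp hAbarc.neg).neg).aestronglyMeasurable
    · rw [Real.norm_eq_abs, abs_neg, abs_of_pos (Real.exp_pos _)]
      exact Real.exp_le_exp.2 (by linarith [abs_le.1 (hAbd u)])
  have hE_eq : ∀ t ∈ Icc (0:ℝ) T, Real.exp (-Abar t) = 1 + ∫ s in (0:ℝ)..t, ψ s := by
    intro t ht
    have hF : ∀ s, Abar s = 0 + ∫ u in (0:ℝ)..s, abar u := fun s => by rw [hAbar_def]; ring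
    have hrange : ∀ s ∈ Icc 0 t, Abar s ∈ Icc (-MA) MA := fun s _ => abs_le.1 (hAbd s)
    have hd : ∀ z ∈ Ioo (-MA - 1) (MA + 1), HasDerivAt (fun z => Real.exp (-z))
        (-Real.exp (-z)) z := by
      intro z _
      have h1 := (Real.hasDerivAt_exp (-z)).comp z (hasDerivAt_neg z)
      simpa [Function.comp_def] using h1
    have hctsd : ContinuousOn (fun z => -Real.exp (-z)) (Ioo (-MA - 1) (MA + 1)) :=
      ((Real.continuous_exp.comp continuous_neg).neg).continuousOn
    have := CP.ftc_comp ht.1 habar hF (by linarith : -MA - 1 < -MA)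
      (by linarith : MA < MA + 1) hrange hd hctsd
    simpa [hψ_def] using this
  -- the transformed solution as primitives
  set X : ℝ → ℝ := fun s => x₀ + ∫ u in (0:ℝ)..s, xbar' u with hX_def
  set Ebar : ℝ → ℝ := fun s => 1 + ∫ u in (0:ℝ)..s, ψ u with hEbar_def
  have hXc : Continuous X := continuous_const.add (hxbar'.continuous_primitive 0)
  have hEbarc : Continuous Ebar := continuous_const.add (hψint.continuous_primitive 0)
  have hXx : ∀ s ∈ Icc (0:ℝ) T, X s = x s := by
    intro s hs
    rw [hxAC s hs, hX_def, hx0]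
    show x₀ + ∫ u in (0:ℝ)..s, xbar' u = x₀ + ∫ u in (0:ℝ)..s, x' u
    congr 1
    exact intervalIntegral.integral_congr fun u hu =>
      indicator_of_mem (hsubIcc s hs hu) x' 
  have hEbarE : ∀ s ∈ Icc (0:ℝ) T, Ebar s = Real.exp (-Abar s) := fun s hs =>
    (hE_eq s hs).symm
  set y : ℝ → ℝ := fun s => Ebar s * X s with hy_def
  have hyc : Continuous y := hEbarc.mul hXc
  have hy_eq : ∀ t ∈ Icc (0:ℝ) T, y t = x₀ + ∫ s in (0:ℝ)..t,
      (Ebar s * xbar' s + X s * ψ s) := by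
    intro t ht
    have := CP.prod_primitive (cφ := 1) (cψ := x₀) ht.1 hψint hxbar'
      (fun s => rfl) (fun s => rfl)
    rw [hy_def]
    simp only []
    rw [this, one_mul]
  have hyx : ∀ s ∈ Icc (0:ℝ) T, y s = Real.exp (-A s) * x s := by
    intro s hs
    rw [hy_def]
    simp only []
    rw [hEbarE s hs, hXx s hs, hAA s hs]
  have hynn : ∀ s ∈ Icc (0:ℝ) T, 0 ≤ y s := by
    intro s hs
    rw [hyx s hs]
    exact mul_nonneg (Real.exp_pos _).le (hxnn s hs)
  -- transformed coefficients
  set Btil : ℝ → ℝ := fun u => Real.exp ((p - 1) * Abar u) * bbar u with hBtil_def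
  set Ftil : ℝ → ℝ := fun u => Real.exp (-Abar u) * fbar u with hFtil_def
  have hBtilint : Integrable Btil volume := by
    refine hbbar.bdd_mul ?_ (c := Real.exp ((p - 1) * MA)) (Filter.Eventually.of_forall fun u => ?_)
    · exact (Real.continuous_exp.comp (continuous_const.mul hAbarc)).aestronglyMeasurable
    · rw [Real.norm_eq_abs, abs_of_pos (Real.exp_pos _)]
      refine Real.exp_le_exp.2 ?_
      have h1 := abs_le.1 (hAbd u)
      nlinarith [h1.1, h1.2, hp]
  have hFtilint : Integrable Ftil volume := by
    refine hfbar.bdd_mul ?_ (c := Real.exp MA) (Filter.Eventually.of_forall fun u => ?_)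
    · exact (Real.continuous_exp.comp hAbarc.neg).aestronglyMeasurable
    · rw [Real.norm_eq_abs, abs_of_pos (Real.exp_pos _)]
      exact Real.exp_le_exp.2 (by linarith [abs_le.1 (hAbd u)])
  have hBtilnn : ∀ u, 0 ≤ Btil u := by
    intro u
    refine mul_nonneg (Real.exp_pos _).le ?_
    rw [hbbar_def]
    exact indicator_nonneg hbnn u
  have hFtilnn : ∀ u, 0 ≤ Ftil u := by
    intro u
    refine mul_nonneg (Real.exp_pos _).le ?_
    rw [hfbar_def]
    exact indicator_nonneg hfnn u
  have hbtB : ∀ s ∈ Icc (0:ℝ) T, btilde s = Btil s := by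
    intro s hs
    rw [hbt s, hBtil_def]
    simp only []
    rw [hAA s hs, hbbar_def, indicator_of_mem hs b, mul_comm]
  have hftF : ∀ s ∈ Icc (0:ℝ) T, ftilde s = Ftil s := by
    intro s hs
    rw [hft s, hFtil_def]
    simp only []
    rw [hAA s hs, hfbar_def, indicator_of_mem hs f]
  -- main argument
  intro τ hτ hcond
  have hτ0 : (0:ℝ) ≤ τ := hτ.1
  have hsubτ : Icc (0:ℝ) τ ⊆ Icc (0:ℝ) T := Icc_subset_Icc (le_refl 0) hτ.2
  have hint_ft : ∫ s in (0:ℝ)..τ, ftilde s = ∫ s in (0:ℝ)..τ, Ftil s :=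
    intervalIntegral.integral_congr fun u hu => hftF u (hsubIcc τ hτ hu)
  have hint_bt : ∫ s in (0:ℝ)..τ, btilde s = ∫ s in (0:ℝ)..τ, Btil s :=
    intervalIntegral.integral_congr fun u hu => hbtB u (hsubIcc τ hτ hu)
  set c := x₀ + ∫ s in (0:ℝ)..τ, Ftil s with hc_def
  set Bτ := ∫ s in (0:ℝ)..τ, Btil s with hBτ_def
  rw [hint_ft, hint_bt] at hcond ⊢
  have hFτnn : 0 ≤ ∫ s in (0:ℝ)..τ, Ftil s :=
    intervalIntegral.integral_nonneg hτ0 fun u _ => hFtilnn u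
  have hcnn : 0 ≤ c := by rw [hc_def]; linarith
  have hx₀c : x₀ ≤ c := by rw [hc_def]; linarith
  have hBτnn : 0 ≤ Bτ :=
    intervalIntegral.integral_nonneg hτ0 fun u _ => hBtilnn u
  -- the nonlinear term
  set ρ : ℝ → ℝ := fun u => max (y u) 0 ^ p * Btil u with hρ_def
  have hp0 : (0:ℝ) ≤ p := by linarith
  have hmaxc : Continuous fun u => max (y u) 0 ^ p :=
    (hyc.max continuous_const).rpow_const fun u => Or.inr hp0
  have hρint : Integrable ρ volume := by
    obtain ⟨My, hMy⟩ : ∃ My, ∀ u, |y u| ≤ My := by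
      refine ⟨(1 + ∫ u, |ψ u|) * (|x₀| + ∫ u, |xbar' u|), fun u => ?_⟩
      rw [hy_def]
      simp only []
      rw [abs_mul]
      refine mul_le_mul ?_ ?_ (abs_nonneg _) ?_
      · rw [hEbar_def]
        exact (abs_add_le _ _).trans (by simp [CP.abs_primitive_le hψint u])
      · rw [hX_def]
        exact (abs_add_le _ _).trans (by simp [CP.abs_primitive_le hxbar' u])
      · have := CP.abs_primitive_le hψint u
        have := abs_nonneg (∫ u in (0:ℝ)..u, ψ u)
        positivity
    refine hBtilint.bdd_mul hmaxc.aestronglyMeasurable (c := max My 0 ^ p) (Filter.Eventually.of_forall fun u => ?_)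
    rw [Real.norm_eq_abs, abs_of_nonneg (Real.rpow_nonneg (le_max_right _ _) p)]
    refine Real.rpow_le_rpow (le_max_right _ _) ?_ hp0
    exact max_le_max (le_trans (le_abs_self _) (hMy u)) (le_refl 0)
  have hρnn : ∀ u, 0 ≤ ρ u := fun u =>
    mul_nonneg (Real.rpow_nonneg (le_max_right _ _) p) (hBtilnn u)
  -- integral inequality for y
  have hyle : ∀ t ∈ Icc (0:ℝ) τ, y t ≤ c + ∫ s in (0:ℝ)..t, ρ s := by
    intro t ht
    have htT : t ∈ Icc (0:ℝ) T := hsubτ ht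
    have hmono : (∫ s in (0:ℝ)..t, (Ebar s * xbar' s + X s * ψ s))
        ≤ ∫ s in (0:ℝ)..t, (ρ s + Ftil s) := by
      refine intervalIntegral.integral_mono_ae_restrict ht.1 ?_ ?_ ?_
      · exact (hxbar'.intervalIntegrable.continuousOn_mul hEbarc.continuousOn).add
          (hψint.intervalIntegrable.continuousOn_mul hXc.continuousOn)
      · exact (hρint.add hFtilint).intervalIntegrable
      · have hmem := ae_restrict_mem (μ := volume) (measurableSet_Icc : MeasurableSet (Icc (0:ℝ) t))
        have hineq' := ae_restrict_of_ae_restrict_of_subset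
          (Icc_subset_Icc (le_refl (0:ℝ)) (le_trans ht.2 hτ.2)) hineq
        filter_upwards [hmem, hineq'] with s hs hsineq
        have hsT : s ∈ Icc (0:ℝ) T := ⟨hs.1, le_trans hs.2 (le_trans ht.2 hτ.2)⟩
        have hEs : Ebar s = Real.exp (-A s) := by rw [hEbarE s hsT, hAA s hsT]
        have hXs : X s = x s := hXx s hsT
        have hχs : xbar' s = x' s := indicator_of_mem hsT x'
        have hψs : ψ s = -Real.exp (-A s) * a s := by
          rw [hψ_def]
          simp only []
          rw [hAA s hsT, habar_def, indicator_of_mem hsT a]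
        have hys : max (y s) 0 = Real.exp (-A s) * x s := by
          rw [max_eq_left (hynn s hsT), hyx s hsT]
        have hBs : Btil s = Real.exp ((p - 1) * A s) * b s := by
          rw [hBtil_def]
          simp only []
          rw [hAA s hsT, hbbar_def, indicator_of_mem hsT b]
        have hFs : Ftil s = Real.exp (-A s) * f s := by
          rw [hFtil_def]
          simp only []
          rw [hAA s hsT, hfbar_def, indicator_of_mem hsT f]
        have hLHS : Ebar s * xbar' s + X s * ψ s
            = Real.exp (-A s) * (x' s - a s * x s) := by
          rw [hEs, hXs, hχs, hψs]; ring
        have hRHS : ρ s + Ftil s = Real.exp (-A s) * (b s * x s ^ p + f s) := by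
          rw [hρ_def]
          simp only []
          rw [hys, hBs, hFs]
          rw [Real.mul_rpow (Real.exp_pos _).le (hxnn s hsT)]
          rw [← Real.exp_mul]
          have hexp : Real.exp (-A s) = Real.exp (-A s * p) * Real.exp ((p - 1) * A s) := by
            rw [← Real.exp_add]; congr 1; ring
          rw [hexp]
          ring
        rw [hLHS, hRHS]
        have hfac : x' s - a s * x s ≤ b s * x s ^ p + f s := by linarith [hsineq]
        exact mul_le_mul_of_nonneg_left hfac (Real.exp_pos _).le
    have hFtil_mono : (∫ s in (0:ℝ)..t, Ftil s) ≤ ∫ s in (0:ℝ)..τ, Ftil s :=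
      intervalIntegral.integral_mono_interval (le_refl (0:ℝ)) ht.1 ht.2
        (Filter.Eventually.of_forall fun u => hFtilnn u) hFtilint.intervalIntegrable
    have hsplit : (∫ s in (0:ℝ)..t, (ρ s + Ftil s))
        = (∫ s in (0:ℝ)..t, ρ s) + ∫ s in (0:ℝ)..t, Ftil s :=
      intervalIntegral.integral_add hρint.intervalIntegrable hFtilint.intervalIntegrable
    have := hy_eq t htT
    rw [this]
    rw [hsplit] at hmono
    rw [hc_def]
    linarith
  -- Bihari comparison for each ε > 0
  have hq : (0:ℝ) < p - 1 := by linarith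
  have hεbound : ∀ ε : ℝ, 0 < ε → (p - 1) * (c + ε) ^ (p - 1) * Bτ < 1 →
      x τ ≤ Real.exp (A τ) *
        ((c + ε) * (1 - (p - 1) * (c + ε) ^ (p - 1) * Bτ) ^ (-(1 / (p - 1)))) := by
    intro ε hε hcondε
    set cε := c + ε with hcε_def
    have hcεpos : 0 < cε := by rw [hcε_def]; linarith
    set w : ℝ → ℝ := fun s => cε + ∫ u in (0:ℝ)..s, ρ u with hw_def
    have hwc : Continuous w := continuous_const.add (hρint.continuous_primitive 0)
    have hwlo : ∀ s, 0 ≤ s → cε ≤ w s := by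
      intro s hs
      have h1 : 0 ≤ ∫ u in (0:ℝ)..s, ρ u :=
        intervalIntegral.integral_nonneg hs fun u _ => hρnn u
      rw [hw_def]
      simp only []
      linarith
    set Mρ := ∫ u, |ρ u| with hMρ_def
    have hMρnn : 0 ≤ Mρ := integral_nonneg fun _ => abs_nonneg _
    have hwhi : ∀ s, w s ≤ cε + Mρ := by
      intro s
      have h1 := CP.abs_primitive_le hρint s
      rw [← hMρ_def] at h1
      have h2 := le_abs_self (∫ u in (0:ℝ)..s, ρ u)
      rw [hw_def]
      simp only []
      linarith
    have hwpos : ∀ s ∈ Icc (0:ℝ) τ, 0 < w s := fun s hs =>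
      lt_of_lt_of_le hcεpos (hwlo s hs.1)
    have hmax_le : ∀ s ∈ Icc (0:ℝ) τ, max (y s) 0 ≤ w s := by
      intro s hs
      refine max_le ?_ (le_of_lt (hwpos s hs))
      have h1 := hyle s hs
      rw [hw_def]
      simp only []
      rw [hcε_def]
      linarith
    have hrange : ∀ s ∈ Icc (0:ℝ) τ, w s ∈ Icc cε (cε + Mρ) := fun s hs =>
      ⟨hwlo s hs.1, hwhi s⟩
    have hlo' : cε / 2 < cε := by linarith
    have hhi' : cε + Mρ < cε + Mρ + 1 := by linarith
    have hdd : ∀ z ∈ Ioo (cε/2) (cε + Mρ + 1), HasDerivAt (fun z : ℝ => z ^ (1 - p))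
        ((1 - p) * z ^ (-p)) z := by
      intro z hz
      have hz0 : z ≠ 0 := ne_of_gt (lt_trans (by linarith) hz.1)
      have h1 := Real.hasDerivAt_rpow_const (x := z) (p := 1 - p) (Or.inl hz0)
      convert h1 using 2
      ring
    have hctsd : ContinuousOn (fun z : ℝ => (1 - p) * z ^ (-p))
        (Ioo (cε/2) (cε + Mρ + 1)) := by
      refine continuousOn_const.mul ?_
      refine ContinuousOn.rpow_const continuousOn_id fun z hz => Or.inl ?_
      exact ne_of_gt (lt_trans (by linarith) hz.1)
    have hkey := CP.ftc_comp hτ0 hρint (fun s => rfl) hlo' hhi' hrange hdd hctsd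
    have hwmem : ∀ s ∈ uIcc (0:ℝ) τ, w s ∈ Ioo (cε/2) (cε + Mρ + 1) := by
      intro s hs
      have hs' : s ∈ Icc (0:ℝ) τ := by rwa [uIcc_of_le hτ0] at hs
      exact ⟨lt_of_lt_of_le hlo' (hrange s hs').1, lt_of_le_of_lt (hrange s hs').2 hhi'⟩
    have hmono : (∫ s in (0:ℝ)..τ, (1 - p) * Btil s)
        ≤ ∫ s in (0:ℝ)..τ, (1 - p) * w s ^ (-p) * ρ s := by
      refine intervalIntegral.integral_mono_on hτ0 ?_ ?_ ?_
      · exact hBtilint.intervalIntegrable.const_mul _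
      · exact hρint.intervalIntegrable.continuousOn_mul
          (hctsd.comp hwc.continuousOn hwmem)
      · intro s hs
        have hws := hwpos s hs
        have hwp : (0:ℝ) < w s ^ (-p) := Real.rpow_pos_of_pos hws _
        have hρle : ρ s ≤ w s ^ p * Btil s := by
          rw [hρ_def]
          simp only []
          exact mul_le_mul_of_nonneg_right
            (Real.rpow_le_rpow (le_max_right _ _) (hmax_le s hs) hp0) (hBtilnn s)
        have hprod : w s ^ (-p) * ρ s ≤ Btil s := by
          have h1 : w s ^ (-p) * (w s ^ p * Btil s) = Btil s := by
            rw [← mul_assoc, ← Real.rpow_add hws]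
            simp
          calc w s ^ (-p) * ρ s ≤ w s ^ (-p) * (w s ^ p * Btil s) :=
                mul_le_mul_of_nonneg_left hρle hwp.le
            _ = Btil s := h1
        have h1p : 1 - p ≤ 0 := by linarith
        calc (1 - p) * Btil s ≤ (1 - p) * (w s ^ (-p) * ρ s) := by
              exact mul_le_mul_of_nonpos_left hprod h1p
          _ = (1 - p) * w s ^ (-p) * ρ s := by ring
    have hBint : (∫ s in (0:ℝ)..τ, (1 - p) * Btil s) = (1 - p) * Bτ := by
      rw [intervalIntegral.integral_const_mul, hBτ_def]
    have hwkey : cε ^ (1 - p) + (1 - p) * Bτ ≤ w τ ^ (1 - p) := by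
      rw [hkey]
      rw [hBint] at hmono
      linarith
    set D := 1 - (p - 1) * cε ^ (p - 1) * Bτ with hD_def
    have hDpos : 0 < D := by rw [hD_def]; linarith
    have hcε1p : (0:ℝ) < cε ^ (1 - p) := Real.rpow_pos_of_pos hcεpos _
    have h1 : cε ^ (1 - p) * cε ^ (p - 1) = 1 := by
      rw [← Real.rpow_add hcεpos]
      norm_num
    have hfactor : cε ^ (1 - p) * D = cε ^ (1 - p) + (1 - p) * Bτ := by
      rw [hD_def]
      linear_combination (-(p - 1) * Bτ) * h1
    have hL : 0 < cε ^ (1 - p) * D := mul_pos hcε1p hDpos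
    have h1pne : (1:ℝ) - p ≠ 0 := by linarith
    have hp1ne : p - 1 ≠ 0 := by linarith
    have hexp_eq : (1:ℝ) / (1 - p) = -(1 / (p - 1)) := by
      field_simp
      ring
    have hwτpos : 0 < w τ := hwpos τ ⟨hτ0, le_refl τ⟩
    have hwle : w τ ≤ cε * D ^ (-(1 / (p - 1))) := by
      have h2 : cε ^ (1 - p) * D ≤ w τ ^ (1 - p) := by rw [hfactor]; exact hwkey
      have h4 : (w τ ^ (1 - p)) ^ ((1:ℝ)/(1 - p)) ≤ (cε ^ (1 - p) * D) ^ ((1:ℝ)/(1 - p)) :=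
        Real.rpow_le_rpow_of_nonpos hL h2
          (le_of_lt (div_neg_of_pos_of_neg one_pos (by linarith)))
      have h5 : (w τ ^ (1 - p)) ^ ((1:ℝ)/(1 - p)) = w τ := by
        rw [← Real.rpow_mul hwτpos.le, mul_one_div, div_self h1pne, Real.rpow_one]
      have h6 : (cε ^ (1 - p) * D) ^ ((1:ℝ)/(1 - p)) = cε * D ^ (-(1 / (p - 1))) := by
        rw [Real.mul_rpow hcε1p.le hDpos.le, ← Real.rpow_mul hcεpos.le,
          mul_one_div, div_self h1pne, Real.rpow_one, hexp_eq]
      rw [h5, h6] at h4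
      exact h4
    have hyw : y τ ≤ w τ := le_trans (le_max_left _ _) (hmax_le τ ⟨hτ0, le_refl τ⟩)
    have hxyτ : x τ = Real.exp (A τ) * y τ := by
      rw [hyx τ hτ, ← mul_assoc, ← Real.exp_add]
      simp
    rw [hxyτ]
    exact mul_le_mul_of_nonneg_left (le_trans hyw hwle) (Real.exp_pos _).le
  -- pass to the limit ε → 0⁺
  have hcond' : (p - 1) * c ^ (p - 1) * Bτ < 1 := hcond
  have hD0 : 0 < 1 - (p - 1) * c ^ (p - 1) * Bτ := by linarith
  have hcontbase : ContinuousAt (fun ε : ℝ => (p - 1) * (c + ε) ^ (p - 1) * Bτ) 0 := by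
    have h1 : ContinuousAt (fun ε : ℝ => c + ε) 0 := continuousAt_const.add continuousAt_id
    have h2 : ContinuousAt (fun z : ℝ => z ^ (p - 1)) ((fun ε : ℝ => c + ε) 0) :=
      Real.continuousAt_rpow_const _ _ (Or.inr hq.le)
    exact (continuousAt_const.mul (h2.comp h1)).mul continuousAt_const
  have htend1 : Filter.Tendsto (fun ε : ℝ => (p - 1) * (c + ε) ^ (p - 1) * Bτ) (nhds 0)
      (nhds ((p - 1) * c ^ (p - 1) * Bτ)) := by
    have h1 := hcontbase.tendsto
    simpa using h1
  have hev1 : ∀ᶠ ε in nhdsWithin 0 (Ioi (0:ℝ)),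
      (p - 1) * (c + ε) ^ (p - 1) * Bτ < 1 :=
    (htend1.mono_left nhdsWithin_le_nhds).eventually (gt_mem_nhds hcond')
  have hev2 : ∀ᶠ ε in nhdsWithin 0 (Ioi (0:ℝ)), x τ ≤ Real.exp (A τ) *
      ((c + ε) * (1 - (p - 1) * (c + ε) ^ (p - 1) * Bτ) ^ (-(1 / (p - 1)))) := by
    filter_upwards [hev1, self_mem_nhdsWithin] with ε h1 h2
    exact hεbound ε h2 h1
  have htend2 : Filter.Tendsto (fun ε : ℝ => Real.exp (A τ) *
      ((c + ε) * (1 - (p - 1) * (c + ε) ^ (p - 1) * Bτ) ^ (-(1 / (p - 1)))))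
      (nhdsWithin 0 (Ioi (0:ℝ)))
      (nhds (Real.exp (A τ) * (c * (1 - (p - 1) * c ^ (p - 1) * Bτ) ^ (-(1 / (p - 1)))))) := by
    refine Filter.Tendsto.mono_left ?_ nhdsWithin_le_nhds
    have h1 : ContinuousAt (fun ε : ℝ => 1 - (p - 1) * (c + ε) ^ (p - 1) * Bτ) 0 :=
      continuousAt_const.sub hcontbase
    have h2 : ContinuousAt
        (fun ε : ℝ => (1 - (p - 1) * (c + ε) ^ (p - 1) * Bτ) ^ (-(1 / (p - 1)))) 0 := by
      refine ContinuousAt.rpow_const h1 (Or.inl ?_)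
      simpa using ne_of_gt hD0
    have h3 : ContinuousAt (fun ε : ℝ => c + ε) 0 := continuousAt_const.add continuousAt_id
    have h4 := (continuousAt_const (y := Real.exp (A τ))).fun_mul (h3.fun_mul h2)
    have h5 := h4.tendsto
    simpa using h5
  have hfinal := ge_of_tendsto htend2 hev2
  rw [mul_assoc]
  exact hfinal
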